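/- arXiv:2112.05955 — 5 statements merged into one kernel-verified Lean document; each statement's English description precedes it below -/
import Mathlib

section
/- Let n ≥ 1, let C ⊆ ℂⁿ be a compact set and let S ⊆ C be a closed subset (playing the role of the boundary ∂C of C). Assume that through every point p ∈ C \ S there passes a nonconstant germ of a complex curve lying in C \ S. Then C satisfies the maximum modulus principle with respect to S: for every open set U ⊆ ℂⁿ with C ⊆ U, every function f : ℂⁿ → ℂ holomorphic on U, and every p ∈ C, there exists q ∈ S with |f(p)| ≤ |f(q)|. -/
open Metric Set

/-- If `g` is holomorphic on the unit ball and `‖g‖` attains its max over the ball at `0`,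
then `‖g z‖ = ‖g 0‖` on the ball. -/
lemma norm_const_of_max (g : ℂ → ℂ) (hg : DifferentiableOn ℂ g (ball (0:ℂ) 1))
    (hm : IsMaxOn (norm ∘ g) (ball (0:ℂ) 1) 0) :
    ∀ z ∈ ball (0:ℂ) 1, ‖g z‖ = ‖g 0‖ :=
  fun z hz => Complex.norm_eqOn_of_isPreconnected_of_isMaxOn
    (convex_ball (0:ℂ) 1).isPreconnected isOpen_ball hg
    (mem_ball_self one_pos) hm hz

/-- A nonconstant germ of a complex curve through `p` lying in `A ⊆ ℂⁿ`:
a map `γ : ℂ → ℂⁿ`, holomorphic on the open unit disc, with `γ 0 = p`,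
image of the disc contained in `A`, and `γ` nonconstant on the disc. -/
def HasCurveGerm {n : ℕ} (A : Set (Fin n → ℂ)) (p : Fin n → ℂ) : Prop :=
  ∃ γ : ℂ → (Fin n → ℂ), DifferentiableOn ℂ γ (Metric.ball (0 : ℂ) 1) ∧ γ 0 = p ∧
    γ '' Metric.ball (0 : ℂ) 1 ⊆ A ∧ ∃ z ∈ Metric.ball (0 : ℂ) 1, γ z ≠ p

/-- Proposition 2.6 of the paper: if through every point of `C \ S` there passes a
nonconstant germ of a complex curve lying in `C \ S`, then `(C, S)` satisfies the
maximum modulus principle. -/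
theorem maximum_modulus_of_curve_germs
    (n : ℕ) (hn : 1 ≤ n) (C S : Set (Fin n → ℂ)) (hC : IsCompact C)
    (hS : IsClosed S) (hSC : S ⊆ C)
    (hgerm : ∀ p ∈ C \ S, HasCurveGerm (C \ S) p) :
    ∀ U : Set (Fin n → ℂ), IsOpen U → C ⊆ U →
      ∀ f : (Fin n → ℂ) → ℂ, DifferentiableOn ℂ f U →
        ∀ p ∈ C, ∃ q ∈ S, ‖f p‖ ≤ ‖f q‖ := by
  intro U hU hCU f hf p hp
  by_contra hcon
  push_neg at hcon
  have hfc : ContinuousOn f C := (hf.continuousOn).mono hCU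
  have habs : ContinuousOn (fun x => ‖f x‖) C := hfc.norm
  obtain ⟨x₀, hx₀C, hx₀max⟩ := hC.exists_isMaxOn ⟨p, hp⟩ habs
  set M := ‖f x₀‖ with hM
  have hpM : ‖f p‖ ≤ M := hx₀max hp
  -- index and multiplier for the 2n real linear functionals
  have hn0 : 0 < n := hn
  set idx : ℕ → Fin n := fun k => ⟨k / 2 % n, Nat.mod_lt _ hn0⟩ with hidx
  set mult : ℕ → ℂ := fun k => if k % 2 = 0 then 1 else -Complex.I with hmult
  set Φ : ℕ → (Fin n → ℂ) → ℝ := fun k x => (mult k * x (idx k)).re with hΦ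
  have hΦcont : ∀ k, Continuous (Φ k) := by
    intro k
    exact Complex.continuous_re.comp (continuous_const.mul (continuous_apply (idx k)))
  -- the key inductive construction
  have key : ∀ j : ℕ, ∃ K' : Set (Fin n → ℂ), K'.Nonempty ∧ IsCompact K' ∧ K' ⊆ C \ S ∧
      ∀ q ∈ K', ∀ γ : ℂ → Fin n → ℂ, DifferentiableOn ℂ γ (ball (0:ℂ) 1) → γ 0 = q →
        γ '' ball (0:ℂ) 1 ⊆ C \ S →
        (γ '' ball (0:ℂ) 1 ⊆ K' ∧ ∀ k < j, ∀ z ∈ ball (0:ℂ) 1, Φ k (γ z) = Φ k q) := by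
    intro j
    induction j with
    | zero =>
      refine ⟨{x ∈ C | ‖f x‖ = M}, ⟨x₀, hx₀C, rfl⟩, ?_, ?_, ?_⟩
      · exact hC.of_isClosed_subset
          (habs.preimage_isClosed_of_isClosed hC.isClosed isClosed_singleton)
          (fun x hx => hx.1)
      · rintro x ⟨hxC, hxM⟩
        refine ⟨hxC, fun hxS => absurd (hcon x hxS) ?_⟩
        push_neg
        exact hxM.symm ▸ hpM
      · rintro q ⟨hqC, hqM⟩ γ hγd hγ0 hγsub
        have hγU : γ '' ball (0:ℂ) 1 ⊆ U := fun x hx => hCU (hγsub hx).1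
        have hFd : DifferentiableOn ℂ (f ∘ γ) (ball (0:ℂ) 1) :=
          hf.comp hγd (fun z hz => hγU ⟨z, hz, rfl⟩)
        have hmax : IsMaxOn (norm ∘ (f ∘ γ)) (ball (0:ℂ) 1) 0 := by
          intro z hz
          have : γ z ∈ C := (hγsub ⟨z, hz, rfl⟩).1
          simp only [Function.comp_apply, hγ0]
          calc ‖f (γ z)‖ ≤ M := hx₀max this
          _ = ‖f q‖ := hqM.symm
        have hEq := norm_const_of_max (f ∘ γ) hFd hmax
        constructor
        · rintro x ⟨z, hz, rfl⟩
          refine ⟨(hγsub ⟨z, hz, rfl⟩).1, ?_⟩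
          have := hEq z hz
          simp only [Function.comp_apply, hγ0] at this
          rw [this, hqM]
        · intro k hk; omega
    | succ j ih =>
      obtain ⟨K', hne, hK, hKCS, hinv⟩ := ih
      obtain ⟨q₀, hq₀K, hq₀max⟩ := hK.exists_isMaxOn hne (hΦcont j).continuousOn
      refine ⟨{x ∈ K' | Φ j x = Φ j q₀}, ⟨q₀, hq₀K, rfl⟩, ?_, fun x hx => hKCS hx.1, ?_⟩
      · exact hK.of_isClosed_subset
          (((hΦcont j).continuousOn.preimage_isClosed_of_isClosed hK.isClosed
            isClosed_singleton)) (fun x hx => hx.1)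
      · rintro q ⟨hqK, hqΦ⟩ γ hγd hγ0 hγsub
        obtain ⟨hKsub, hconst⟩ := hinv q hqK γ hγd hγ0 hγsub
        -- the exponential trick for functional Φ j
        set g : ℂ → ℂ := fun z => Complex.exp (mult j * γ z (idx j)) with hg
        have hgd : DifferentiableOn ℂ g (ball (0:ℂ) 1) := by
          apply Complex.differentiable_exp.comp_differentiableOn
          exact ((ContinuousLinearMap.proj (idx j) :
            (Fin n → ℂ) →L[ℂ] ℂ).differentiable.comp_differentiableOn hγd).const_mul _
        have hgnorm : ∀ z, ‖g z‖ = Real.exp (Φ j (γ z)) := by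
          intro z
          simp [hg, Complex.norm_exp, hΦ]
        have hmax : IsMaxOn (norm ∘ g) (ball (0:ℂ) 1) 0 := by
          intro z hz
          simp only [Function.comp_apply, hgnorm]
          have h1 : Φ j (γ z) ≤ Φ j q₀ := hq₀max (hKsub ⟨z, hz, rfl⟩)
          have h2 : Φ j (γ 0) = Φ j q₀ := by rw [hγ0, hqΦ]
          exact Real.exp_le_exp.mpr (h2 ▸ h1)
        have hEq := norm_const_of_max g hgd hmax
        have hΦeq : ∀ z ∈ ball (0:ℂ) 1, Φ j (γ z) = Φ j q := by
          intro z hz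
          have := hEq z hz
          rw [hgnorm, hgnorm] at this
          have := Real.exp_injective this
          rw [this, hγ0]
        constructor
        · rintro x ⟨z, hz, rfl⟩
          exact ⟨hKsub ⟨z, hz, rfl⟩, (hΦeq z hz).trans hqΦ⟩
        · intro k hk z hz
          rcases Nat.lt_succ_iff_lt_or_eq.mp hk with h | h
          · exact hconst k h z hz
          · subst h; exact hΦeq z hz
  -- conclude
  obtain ⟨K', ⟨q, hqK⟩, hK, hKCS, hinv⟩ := key (2 * n)
  obtain ⟨γ, hγd, hγ0, hγsub, z, hz, hne⟩ := hgerm q (hKCS hqK)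
  obtain ⟨-, hconst⟩ := hinv q hqK γ hγd hγ0 hγsub
  apply hne
  funext i
  have h2i : Φ (2 * i) (γ z) = Φ (2 * i) q := hconst (2 * i) (by omega) z hz
  have h2i1 : Φ (2 * i + 1) (γ z) = Φ (2 * i + 1) q := hconst (2 * i + 1) (by omega) z hz
  have hidx1 : idx (2 * i) = i := by
    simp only [hidx]
    ext
    simp [Nat.mul_div_cancel_left, Nat.mod_eq_of_lt i.isLt]
  have hidx2 : idx (2 * i + 1) = i := by
    simp only [hidx]
    ext
    have : (2 * (i : ℕ) + 1) / 2 = i := by omega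
    simp [this, Nat.mod_eq_of_lt i.isLt]
  have hm1 : mult (2 * i) = 1 := by simp [hmult, Nat.mul_mod_right]
  have hm2 : mult (2 * i + 1) = -Complex.I := by
    have : (2 * (i : ℕ) + 1) % 2 = 1 := by omega
    simp [hmult, this]
  rw [hΦ] at h2i h2i1
  simp only [hidx1, hidx2, hm1, hm2, one_mul] at h2i h2i1
  have hre : (γ z i).re = (q i).re := h2i
  have him : (γ z i).im = (q i).im := by
    have e1 : (-Complex.I * γ z i).re = (γ z i).im := by simp
    have e2 : (-Complex.I * q i).re = (q i).im := by simp
    rw [e1, e2] at h2i1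
    exact h2i1
  exact Complex.ext hre him
end

section
/- For every n, there is no nonempty compact set K ⊆ ℂⁿ such that through every point of K there passes a nonconstant germ of a complex curve lying in K. Precisely: if K ⊆ ℂⁿ is compact and for every p ∈ K there exists a map γ : ℂ → ℂⁿ holomorphic on the open unit disc 𝔻 with γ(0) = p, γ(𝔻) ⊆ K, and γ nonconstant on 𝔻, then K = ∅. -/
/-- No nonempty compact subset of ℂⁿ carries a nonconstant germ of a complex curve
through each of its points. -/
theorem eq_empty_of_compact_of_curve_germs
    (n : ℕ) (K : Set (Fin n → ℂ)) (hK : IsCompact K)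
    (hgerm : ∀ p ∈ K, HasCurveGerm K p) : K = ∅ := by
  by_contra hne
  rw [← Set.not_nonempty_iff_eq_empty] at hne
  push_neg at hne
  set e : (Fin n → ℂ) ≃L[ℂ] EuclideanSpace ℂ (Fin n) :=
    (PiLp.continuousLinearEquiv 2 ℂ (fun _ : Fin n => ℂ)).symm with he
  -- maximize the euclidean norm on K
  obtain ⟨p, hpK, hmax⟩ := hK.exists_isMaxOn hne
    ((continuous_norm.comp e.continuous).continuousOn)
  obtain ⟨γ, hγd, hγ0, hγK, z, hz, hzne⟩ := hgerm p hpK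
  set q : EuclideanSpace ℂ (Fin n) := e p with hq
  have hγmem : ∀ w ∈ Metric.ball (0:ℂ) 1, γ w ∈ K := fun w hw =>
    hγK ⟨w, hw, rfl⟩
  have hnorm_le : ∀ w ∈ Metric.ball (0:ℂ) 1, ‖e (γ w)‖ ≤ ‖q‖ := fun w hw =>
    hmax (hγmem w hw)
  -- the holomorphic scalar function
  set f : ℂ → ℂ := fun w => inner ℂ q (e (γ w)) with hf
  have hfd : DifferentiableOn ℂ f (Metric.ball (0:ℂ) 1) := by
    exact ((innerSL ℂ q).differentiable.comp e.differentiable).comp_differentiableOn hγd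
  have hf0 : f 0 = (‖q‖ : ℂ) ^ 2 := by
    show (inner ℂ q (e (γ 0)) : ℂ) = _
    rw [hγ0]
    exact inner_self_eq_norm_sq_to_K q
  have hfle : ∀ w ∈ Metric.ball (0:ℂ) 1, ‖f w‖ ≤ ‖q‖ ^ 2 := by
    intro w hw
    calc ‖f w‖ ≤ ‖q‖ * ‖e (γ w)‖ := norm_inner_le_norm _ _
    _ ≤ ‖q‖ * ‖q‖ := by
        exact mul_le_mul_of_nonneg_left (hnorm_le w hw) (norm_nonneg _)
    _ = ‖q‖ ^ 2 := (sq ‖q‖).symm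
  have hmaxf : IsMaxOn (norm ∘ f) (Metric.ball (0:ℂ) 1) 0 := by
    intro w hw
    simp only [Function.comp, Set.mem_setOf_eq, hf0]
    calc ‖f w‖ ≤ ‖q‖ ^ 2 := hfle w hw
    _ = ‖(‖q‖ : ℂ) ^ 2‖ := by
        rw [norm_pow, Complex.norm_real, Real.norm_eq_abs, abs_of_nonneg (norm_nonneg _)]
  have hconst : Set.EqOn f (Function.const ℂ (f 0)) (Metric.ball (0:ℂ) 1) :=
    Complex.eqOn_of_isPreconnected_of_isMaxOn_norm
      (convex_ball (0:ℂ) 1).isPreconnected Metric.isOpen_ball hfd (by simp) hmaxf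
  -- now derive γ z = p
  have hfz : f z = (‖q‖:ℂ)^2 := by
    have := hconst hz; simpa [hf0] using this
  by_cases hq0 : q = 0
  · -- then the norm is identically zero on K, so K = {p}
    apply hzne
    have h1 : ‖e (γ z)‖ ≤ 0 := by simpa [hq0] using hnorm_le z hz
    have h2 : e (γ z) = 0 := norm_le_zero_iff.mp h1
    have h3 : e p = 0 := by rw [← hq, hq0]
    have : e (γ z) = e p := by rw [h2, h3]
    exact e.injective this
  · have hqn : (0:ℝ) < ‖q‖ := norm_pos_iff.mpr hq0
    set x : EuclideanSpace ℂ (Fin n) := e (γ z) with hx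
    have hcs : ‖q‖^2 ≤ ‖q‖ * ‖x‖ := by
      calc ‖q‖^2 = ‖f z‖ := by
            rw [hfz, norm_pow, Complex.norm_real, Real.norm_eq_abs,
              abs_of_nonneg (norm_nonneg _)]
      _ ≤ ‖q‖ * ‖x‖ := norm_inner_le_norm _ _
    have hxq : ‖x‖ = ‖q‖ := le_antisymm (hnorm_le z hz) <| by
      nlinarith [hcs, hqn]
    have hinner : (inner ℂ q x : ℂ) = ‖q‖ * ‖x‖ := by
      have h0 : (inner ℂ q x : ℂ) = f z := rfl
      rw [h0, hfz, hxq]; ring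
    have := inner_eq_norm_mul_iff.mp hinner
    rw [hxq] at this
    have hx_eq : x = q := by
      have := smul_right_injective (EuclideanSpace ℂ (Fin n))
        (r := (‖q‖:ℂ)) (by exact_mod_cast hqn.ne') this
      exact this.symm
    exact hzne (e.injective (by rw [← hx, hx_eq, hq]))
end

section
/- Let K ⊆ ℂⁿ be a nonempty compact set such that through every point of K there passes a nonconstant germ of a complex curve lying in K. Let U ⊆ ℂⁿ be open with K ⊆ U, let g be holomorphic on U, and let p ∈ K satisfy |g(z)| ≤ |g(p)| for all z ∈ K. Then the level set K′ := {z ∈ K : g(z) = g(p)} is a nonempty compact set which again has the property that through every point of K′ there passes a nonconstant germ of a complex curve lying in K′. -/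
/-- Inductive step in the proof of Proposition 2.6: the extremal level set of a
holomorphic function on a compact set filled by curve germs is again a nonempty
compact set filled by curve germs. -/
theorem level_set_curve_germs
    (n : ℕ) (K : Set (Fin n → ℂ)) (hne : K.Nonempty) (hK : IsCompact K)
    (hgerm : ∀ p ∈ K, HasCurveGerm K p)
    (U : Set (Fin n → ℂ)) (hU : IsOpen U) (hKU : K ⊆ U)
    (g : (Fin n → ℂ) → ℂ) (hg : DifferentiableOn ℂ g U)
    (p : Fin n → ℂ) (hp : p ∈ K)
    (hmax : ∀ z ∈ K, ‖g z‖ ≤ ‖g p‖) :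
    ({z ∈ K | g z = g p}).Nonempty ∧ IsCompact {z ∈ K | g z = g p} ∧
      ∀ q ∈ {z ∈ K | g z = g p}, HasCurveGerm {z ∈ K | g z = g p} q := by
  refine ⟨⟨p, hp, rfl⟩, ?_, ?_⟩
  · have hclosed : IsClosed {z ∈ K | g z = g p} := by
      have : {z ∈ K | g z = g p} = K ∩ g ⁻¹' {g p} := by ext z; simp [Set.mem_setOf_eq]
      rw [this]
      exact (hg.continuousOn.mono hKU).preimage_isClosed_of_isClosed hK.isClosed isClosed_singleton
    exact hK.of_isClosed_subset hclosed (fun z hz => hz.1)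
  · rintro q ⟨hqK, hq⟩
    obtain ⟨γ, hγd, hγ0, hγim, z₀, hz₀, hz₀ne⟩ := hgerm q hqK
    refine ⟨γ, hγd, hγ0, ?_, z₀, hz₀, hz₀ne⟩
    have hsubU : γ '' Metric.ball (0 : ℂ) 1 ⊆ U := hγim.trans hKU
    have hcomp : DifferentiableOn ℂ (g ∘ γ) (Metric.ball (0 : ℂ) 1) :=
      hg.comp hγd fun x hx => hsubU ⟨x, hx, rfl⟩
    have hmaxon : IsMaxOn (norm ∘ (g ∘ γ)) (Metric.ball (0 : ℂ) 1) 0 := by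
      intro x hx
      simp only [Function.comp_apply, Set.mem_setOf_eq, hγ0]
      have : γ x ∈ K := hγim ⟨x, hx, rfl⟩
      simpa [hq] using hmax _ this
    have hconst := Complex.eqOn_of_isPreconnected_of_isMaxOn_norm
      (convex_ball (0:ℂ) 1).isPreconnected Metric.isOpen_ball hcomp
      (Metric.mem_ball_self one_pos) hmaxon
    rintro _ ⟨x, hx, rfl⟩
    refine ⟨hγim ⟨x, hx, rfl⟩, ?_⟩
    have := hconst hx
    simp only [Function.comp_apply, Function.const_apply, hγ0] at this
    rw [this, hq]
end

section
/- Let C ⊆ ℂⁿ be a compact set and S ⊆ C a subset, and assume that through every point p ∈ C \ S there passes a nonconstant germ of a complex curve lying in C \ S. Let U ⊆ ℂⁿ be open with C ⊆ U, let f be holomorphic on U, and let p ∈ C satisfy |f(z)| ≤ |f(p)| for all z ∈ C and |f(q)| < |f(p)| for all q ∈ S. Then the level set K := {z ∈ C : f(z) = f(p)} is a nonempty compact set disjoint from S, and through every point of K there passes a nonconstant germ of a complex curve lying in K. -/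
/-- First step of the proof of Proposition 2.6: from a hypothetical violation of the
maximum modulus principle one extracts a nonempty compact level set `K`, disjoint
from `S`, through every point of which passes a nonconstant curve germ lying in `K`. -/
theorem level_set_of_violation_curve_germs
    (n : ℕ) (C S : Set (Fin n → ℂ)) (hC : IsCompact C) (hSC : S ⊆ C)
    (hgerm : ∀ p ∈ C \ S, HasCurveGerm (C \ S) p)
    (U : Set (Fin n → ℂ)) (hU : IsOpen U) (hCU : C ⊆ U)
    (f : (Fin n → ℂ) → ℂ) (hf : DifferentiableOn ℂ f U)
    (p : Fin n → ℂ) (hp : p ∈ C)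
    (hmax : ∀ z ∈ C, ‖f z‖ ≤ ‖f p‖)
    (hstrict : ∀ q ∈ S, ‖f q‖ < ‖f p‖) :
    ({z ∈ C | f z = f p}).Nonempty ∧ IsCompact {z ∈ C | f z = f p} ∧
      Disjoint {z ∈ C | f z = f p} S ∧
      ∀ q ∈ {z ∈ C | f z = f p}, HasCurveGerm {z ∈ C | f z = f p} q := by
  have hKdisj : Disjoint {z ∈ C | f z = f p} S := by
    rw [Set.disjoint_left]
    rintro q ⟨hqC, hqf⟩ hqS
    exact absurd (hqf ▸ hstrict q hqS) (lt_irrefl _)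
  refine ⟨⟨p, hp, rfl⟩, ?_, hKdisj, ?_⟩
  · have hfc : ContinuousOn f C := (hf.continuousOn).mono hCU
    have : IsClosed {z ∈ C | f z = f p} := by
      have := hfc.preimage_isClosed_of_isClosed hC.isClosed (isClosed_singleton (x := f p))
      simpa [Set.preimage, Set.setOf_and] using this
    exact hC.of_isClosed_subset this (Set.sep_subset _ _)
  · rintro q ⟨hqC, hqf⟩
    have hqCS : q ∈ C \ S := ⟨hqC, fun hqS => absurd (hqf ▸ hstrict q hqS) (lt_irrefl _)⟩
    obtain ⟨γ, hγd, hγ0, hγim, z, hz, hzne⟩ := hgerm q hqCS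
    have hsubU : γ '' Metric.ball (0 : ℂ) 1 ⊆ U := fun x hx =>
      hCU (hγim hx).1
    have hd : DifferentiableOn ℂ (f ∘ γ) (Metric.ball (0 : ℂ) 1) :=
      hf.comp hγd (fun x hx => hsubU ⟨x, hx, rfl⟩)
    have hmem0 : (0 : ℂ) ∈ Metric.ball (0 : ℂ) 1 := by simp
    have hmaxon : IsMaxOn (norm ∘ (f ∘ γ)) (Metric.ball (0 : ℂ) 1) 0 := by
      intro x hx
      have h1 : ‖f (γ x)‖ ≤ ‖f p‖ :=
        hmax _ (hγim ⟨x, hx, rfl⟩).1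
      simp only [Function.comp_apply, Set.mem_setOf_eq, hγ0, hqf]
      exact h1
    have heq := Complex.eqOn_of_isPreconnected_of_isMaxOn_norm
      ((convex_ball (0:ℂ) 1).isPreconnected) (Metric.isOpen_ball) hd hmem0 hmaxon
    refine ⟨γ, hγd, hγ0, ?_, z, hz, hγ0 ▸ hzne⟩
    rintro x ⟨w, hw, rfl⟩
    refine ⟨(hγim ⟨w, hw, rfl⟩).1, ?_⟩
    have := heq hw
    simp only [Function.comp_apply, Function.const_apply, hγ0] at this
    rw [this, hqf]
end

section
/- Let D ⊆ ℂⁿ be open, let C ⊆ D be compact and S ⊆ C, and assume the pair (C, S) satisfies the maximum modulus principle relative to D. Let ρ > 0 be such that the closed ρ-thickening {z : dist(z, S) ≤ ρ} (in the sup metric) is contained in D, let f be holomorphic on D, and let M ≥ 0 satisfy |f(z)| ≤ M for every z with dist(z, S) ≤ ρ. Then for every point z ∈ C and every multi-index m ∈ ℕⁿ one has |∂^m f(z)| ≤ M · m!/ρ^{|m|}. -/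
/-- Partial derivative of `f : ℂⁿ → ℂ` in the `i`-th coordinate direction. -/
noncomputable def partialDeriv {n : ℕ} (i : Fin n) (f : (Fin n → ℂ) → ℂ) :
    (Fin n → ℂ) → ℂ :=
  fun z => fderiv ℂ f z (Pi.single i 1)

/-- Mixed partial derivative `∂^m f` for a multi-index `m : Fin n → ℕ`. -/
noncomputable def mixedPartialDeriv {n : ℕ} (m : Fin n → ℕ) (f : (Fin n → ℂ) → ℂ) :
    (Fin n → ℂ) → ℂ :=
  ((List.ofFn fun i : Fin n => (partialDeriv i)^[m i]).foldr (· ∘ ·) id) f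

/-- The pair `(C, S)` satisfies the maximum modulus principle relative to `D`. -/
def SatisfiesMMP {n : ℕ} (D C S : Set (Fin n → ℂ)) : Prop :=
  ∀ g : (Fin n → ℂ) → ℂ, DifferentiableOn ℂ g D →
    ∀ z ∈ C, ∃ w ∈ S, ‖g z‖ ≤ ‖g w‖


open Metric Set Complex MeasureTheory

/-- One-dimensional Cauchy inequality for iterated derivatives. -/
lemma oneDimCauchy {s : ℂ → ℂ} {c : ℂ} {ρ K : ℝ} (hρ : 0 < ρ)
    (hs : DifferentiableOn ℂ s (closedBall c ρ))
    (hK : ∀ ζ ∈ closedBall c ρ, ‖s ζ‖ ≤ K) (m : ℕ) :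
    ‖deriv^[m] s c‖ ≤ K * m.factorial / ρ ^ m := by
  have hK0 : 0 ≤ K := le_trans (norm_nonneg _) (hK c (mem_closedBall_self hρ.le))
  set R : NNReal := ⟨ρ, hρ.le⟩
  have hR : (0 : NNReal) < R := hρ
  have h := hs.hasFPowerSeriesOnBall (R := R) hR
  set p := cauchyPowerSeries s c ρ with hp
  have h1 : (m.factorial : ℕ) • p m (fun _ => (1:ℂ)) =
      iteratedFDeriv ℂ m s c (fun _ => 1) := h.factorial_smul 1 m
  have h2 : deriv^[m] s c = iteratedDeriv m s c := by
    rw [iteratedDeriv_eq_iterate]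
  have h3 : iteratedDeriv m s c = iteratedFDeriv ℂ m s c (fun _ => 1) :=
    iteratedDeriv_eq_iteratedFDeriv ..
  have h4 : ‖deriv^[m] s c‖ = (m.factorial : ℝ) * ‖p m (fun _ => (1:ℂ))‖ := by
    rw [h2, h3, ← h1]
    simp [norm_smul]
  have h5 : ‖p m (fun _ => (1:ℂ))‖ ≤ ‖p m‖ := by
    have := (p m).le_opNorm (fun _ => (1:ℂ))
    simpa using this -- ok
  have h6 : ‖p m‖ ≤ ((2 * Real.pi)⁻¹ * ∫ θ : ℝ in (0)..2 * Real.pi,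
      ‖s (circleMap c ρ θ)‖) * |ρ|⁻¹ ^ m := norm_cauchyPowerSeries_le s c ρ m
  have hcont : Continuous fun θ : ℝ => ‖s (circleMap c ρ θ)‖ := by
    have : Continuous fun θ : ℝ => s (circleMap c ρ θ) := by
      apply (hs.continuousOn).comp_continuous (continuous_circleMap c ρ)
      intro θ
      exact circleMap_mem_closedBall c hρ.le θ
    exact this.norm
  have h7 : (∫ θ : ℝ in (0)..2 * Real.pi, ‖s (circleMap c ρ θ)‖) ≤ 2 * Real.pi * K := by
    have : (∫ θ : ℝ in (0)..2 * Real.pi, ‖s (circleMap c ρ θ)‖) ≤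
        ∫ _ : ℝ in (0)..2 * Real.pi, K := by
      apply intervalIntegral.integral_mono_on Real.two_pi_pos.le
        (hcont.intervalIntegrable 0 (2 * Real.pi)) (intervalIntegrable_const)
      intro θ _
      exact hK _ (circleMap_mem_closedBall c hρ.le θ)
    simpa [mul_comm] using this
  calc ‖deriv^[m] s c‖ = (m.factorial : ℝ) * ‖p m (fun _ => (1:ℂ))‖ := h4
    _ ≤ (m.factorial : ℝ) * (((2 * Real.pi)⁻¹ * (2 * Real.pi * K)) * |ρ|⁻¹ ^ m) := by
        apply mul_le_mul_of_nonneg_left _ (by positivity)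
        refine h5.trans (h6.trans ?_)
        apply mul_le_mul_of_nonneg_right _ (by positivity)
        exact mul_le_mul_of_nonneg_left h7 (by positivity)
    _ = K * m.factorial / ρ ^ m := by
        rw [abs_of_pos hρ]
        rw [inv_mul_cancel_left₀ (by positivity : (2 * Real.pi) ≠ 0) K, inv_pow]
        ring

lemma sliceHasDerivAt {n : ℕ} {f : (Fin n → ℂ) → ℂ} (i : Fin n) {z : Fin n → ℂ} {ζ₀ : ℂ}
    (hf : DifferentiableAt ℂ f (z + ζ₀ • (Pi.single i 1 : Fin n → ℂ))) :
    HasDerivAt (fun ζ : ℂ => f (z + ζ • (Pi.single i 1 : Fin n → ℂ)))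
      (partialDeriv i f (z + ζ₀ • (Pi.single i 1 : Fin n → ℂ))) ζ₀ := by
  have hcurve : HasDerivAt (fun ζ : ℂ => z + ζ • (Pi.single i 1 : Fin n → ℂ))
      (Pi.single i 1 : Fin n → ℂ) ζ₀ := by
    simpa using ((hasDerivAt_id ζ₀).smul_const (Pi.single i 1 : Fin n → ℂ)).const_add z
  exact hf.hasFDerivAt.comp_hasDerivAt ζ₀ hcurve

lemma sliceDiffOn {n : ℕ} {f : (Fin n → ℂ) → ℂ} {D : Set (Fin n → ℂ)}
    (hf : DifferentiableOn ℂ f D) (i : Fin n) (z : Fin n → ℂ) :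
    DifferentiableOn ℂ (fun ζ : ℂ => f (z + ζ • (Pi.single i 1 : Fin n → ℂ)))
      {ζ : ℂ | z + ζ • (Pi.single i 1 : Fin n → ℂ) ∈ D} := by
  apply hf.comp
  · apply DifferentiableOn.const_add
    exact (differentiable_id.smul_const _).differentiableOn
  · exact fun ζ hζ => hζ

lemma norm_single_smul {n : ℕ} (i : Fin n) (ζ : ℂ) :
    ‖ζ • (Pi.single i 1 : Fin n → ℂ)‖ = ‖ζ‖ := by
  rw [norm_smul, Pi.norm_single, norm_one, mul_one]

lemma partialDeriv_norm_le {n : ℕ} {f : (Fin n → ℂ) → ℂ} {D : Set (Fin n → ℂ)}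
    (hD : IsOpen D) (hf : DifferentiableOn ℂ f D) {z₀ : Fin n → ℂ} {r K : ℝ}
    (hr : 0 < r) (hsub : closedBall z₀ (3 * r) ⊆ D)
    (hK : ∀ z ∈ closedBall z₀ (3 * r), ‖f z‖ ≤ K)
    {a : Fin n → ℂ} (ha : a ∈ closedBall z₀ (2 * r + r / 2)) (j : Fin n) :
    ‖partialDeriv j f a‖ ≤ 2 * K / r := by
  have hsl : DifferentiableOn ℂ (fun ζ : ℂ => f (a + ζ • (Pi.single j 1 : Fin n → ℂ)))
      (closedBall (0:ℂ) (r/2)) := by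
    apply (sliceDiffOn hf j a).mono
    intro ζ hζ
    apply hsub
    simp only [mem_closedBall] at *
    calc dist (a + ζ • (Pi.single j 1 : Fin n → ℂ)) z₀
        ≤ dist (a + ζ • (Pi.single j 1 : Fin n → ℂ)) a + dist a z₀ := dist_triangle _ _ _
      _ ≤ ‖ζ‖ + (2 * r + r / 2) := by
          rw [show dist (a + ζ • (Pi.single j 1 : Fin n → ℂ)) a = ‖ζ‖ from by
            rw [dist_eq_norm, add_sub_cancel_left, norm_single_smul]]
          exact add_le_add le_rfl ha
      _ ≤ 3 * r := by
          have : ‖ζ‖ ≤ r / 2 := by simpa using hζ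
          linarith
  have hKb : ∀ ζ ∈ closedBall (0:ℂ) (r/2),
      ‖f (a + ζ • (Pi.single j 1 : Fin n → ℂ))‖ ≤ K := by
    intro ζ hζ
    apply hK
    simp only [mem_closedBall] at *
    calc dist (a + ζ • (Pi.single j 1 : Fin n → ℂ)) z₀
        ≤ dist (a + ζ • (Pi.single j 1 : Fin n → ℂ)) a + dist a z₀ := dist_triangle _ _ _
      _ ≤ r / 2 + (2 * r + r / 2) := by
          rw [show dist (a + ζ • (Pi.single j 1 : Fin n → ℂ)) a = ‖ζ‖ from by
            rw [dist_eq_norm, add_sub_cancel_left, norm_single_smul]]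
          exact add_le_add (by simpa using hζ) ha
      _ = 3 * r := by ring
  have hest := oneDimCauchy (by linarith : (0:ℝ) < r/2) hsl hKb 1
  have haD : DifferentiableAt ℂ f a := by
    apply hf.differentiableAt (hD.mem_nhds _)
    apply hsub
    simp only [mem_closedBall] at *
    linarith
  have hda : HasDerivAt (fun ζ : ℂ => f (a + ζ • (Pi.single j 1 : Fin n → ℂ)))
      (partialDeriv j f a) 0 := by
    have := sliceHasDerivAt (f := f) j (z := a) (ζ₀ := 0) (by simpa using haD)
    simpa using this
  have : deriv^[1] (fun ζ : ℂ => f (a + ζ • (Pi.single j 1 : Fin n → ℂ))) 0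
      = partialDeriv j f a := by
    simpa using hda.deriv
  rw [this] at hest
  calc ‖partialDeriv j f a‖ ≤ K * 1 / (r/2) ^ 1 := by simpa using hest
    _ = 2 * K / r := by field_simp

lemma fderiv_norm_le {n : ℕ} {f : (Fin n → ℂ) → ℂ} {D : Set (Fin n → ℂ)}
    (hD : IsOpen D) (hf : DifferentiableOn ℂ f D) {z₀ : Fin n → ℂ} {r K : ℝ}
    (hr : 0 < r) (hK0 : 0 ≤ K) (hsub : closedBall z₀ (3 * r) ⊆ D)
    (hK : ∀ z ∈ closedBall z₀ (3 * r), ‖f z‖ ≤ K)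
    {a : Fin n → ℂ} (ha : a ∈ closedBall z₀ (2 * r + r / 2)) :
    ‖fderiv ℂ f a‖ ≤ n * (2 * K / r) := by
  apply ContinuousLinearMap.opNorm_le_bound _ (by positivity)
  intro v
  have hv : v = ∑ j, (v j) • (Pi.single j 1 : Fin n → ℂ) := by
    have h1 : ∀ j, (v j) • (Pi.single j 1 : Fin n → ℂ) = Pi.single j (v j) := by
      intro j
      funext k
      by_cases h : k = j <;> simp [Pi.single_apply, h]
    simp only [h1, Finset.univ_sum_single]
  calc ‖fderiv ℂ f a v‖ = ‖∑ j, (v j) • fderiv ℂ f a (Pi.single j 1 : Fin n → ℂ)‖ := by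
        conv_lhs => rw [hv]
        rw [map_sum]
        simp only [_root_.map_smul]
    _ ≤ ∑ j, ‖(v j) • fderiv ℂ f a (Pi.single j 1 : Fin n → ℂ)‖ := norm_sum_le _ _
    _ ≤ ∑ j : Fin n, ‖v‖ * (2 * K / r) := by
        apply Finset.sum_le_sum
        intro j _
        rw [norm_smul]
        apply mul_le_mul (norm_le_pi_norm v j)
          (partialDeriv_norm_le hD hf hr hsub hK ha j) (norm_nonneg _) (norm_nonneg _)
    _ = n * (2 * K / r) * ‖v‖ := by
        rw [Finset.sum_const]
        simp [mul_comm, mul_assoc, mul_left_comm]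

lemma partialDeriv_eq_integral {n : ℕ} {f : (Fin n → ℂ) → ℂ} {D : Set (Fin n → ℂ)}
    (hD : IsOpen D) (hf : DifferentiableOn ℂ f D) {z₀ : Fin n → ℂ} {r : ℝ}
    (hr : 0 < r) (hsub : closedBall z₀ (3 * r) ⊆ D) (i : Fin n)
    {z : Fin n → ℂ} (hz : z ∈ ball z₀ (r / 2)) :
    partialDeriv i f z = ∫ θ in (0:ℝ)..2 * Real.pi,
      ((2 * (Real.pi:ℂ))⁻¹ * (circleMap 0 r θ)⁻¹) *
        f (z + circleMap 0 r θ • (Pi.single i 1 : Fin n → ℂ)) := by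
  set e : Fin n → ℂ := Pi.single i 1 with he
  set s : ℂ → ℂ := fun ζ => f (z + ζ • e) with hs
  have hmem : ∀ ζ : ℂ, ‖ζ‖ ≤ r → z + ζ • e ∈ D := by
    intro ζ hζ
    apply hsub
    rw [mem_closedBall]
    calc dist (z + ζ • e) z₀ ≤ dist (z + ζ • e) z + dist z z₀ := dist_triangle _ _ _
      _ ≤ r + r / 2 := by
          apply add_le_add _ (mem_ball.mp hz).le
          rw [dist_eq_norm, add_sub_cancel_left, he, norm_single_smul]
          exact hζ
      _ ≤ 3 * r := by linarith
  have hsd : DifferentiableOn ℂ s (closedBall (0:ℂ) r) := by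
    apply (sliceDiffOn hf i z).mono
    intro ζ hζ
    exact hmem ζ (by simpa [dist_eq_norm] using mem_closedBall.mp hζ)
  have h := hsd.hasFPowerSeriesOnBall (R := ⟨r, hr.le⟩) (by exact_mod_cast hr)
  have hderiv : partialDeriv i f z = deriv s 0 := by
    have hzD : z ∈ D := by
      have := hmem 0 (by simp [hr.le])
      simpa using this
    have hda : DifferentiableAt ℂ f z := hf.differentiableAt (hD.mem_nhds hzD)
    have h2 := sliceHasDerivAt (f := f) i (z := z) (ζ₀ := 0) (by simpa using hda)
    have h3 : partialDeriv i f (z + (0:ℂ) • (Pi.single i 1 : Fin n → ℂ)) = partialDeriv i f z := by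
      simp
    rw [h3] at h2
    rw [← h2.deriv]
  have hcoeff : deriv s 0 = (cauchyPowerSeries s 0 r).coeff 1 := h.hasFPowerSeriesAt.deriv
  have happ : (cauchyPowerSeries s 0 r).coeff 1 =
      (2 * Real.pi * I : ℂ)⁻¹ • ∮ ζ in C(0, r), ((1:ℂ) / (ζ - 0)) ^ 1 • (ζ - 0)⁻¹ • s ζ := by
    rw [FormalMultilinearSeries.coeff]
    have := cauchyPowerSeries_apply s 0 r 1 1
    simpa using this
  rw [hderiv, hcoeff, happ]
  rw [circleIntegral]
  rw [← intervalIntegral.integral_smul]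
  apply intervalIntegral.integral_congr
  intro θ _
  have hne : circleMap 0 r θ ≠ 0 := circleMap_ne_center hr.ne'
  have hpi : (Real.pi : ℂ) ≠ 0 := by exact_mod_cast Real.pi_ne_zero
  simp only [deriv_circleMap, sub_zero, smul_eq_mul, one_div]
  field_simp
  ring

set_option synthInstance.maxHeartbeats 1000000 in
lemma diffOn_partialDeriv {n : ℕ} {f : (Fin n → ℂ) → ℂ} {D : Set (Fin n → ℂ)}
    (hD : IsOpen D) (hf : DifferentiableOn ℂ f D) (i : Fin n) :
    DifferentiableOn ℂ (partialDeriv i f) D := by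
  intro z₀ hz₀
  suffices h : DifferentiableAt ℂ (partialDeriv i f) z₀ from h.differentiableWithinAt
  obtain ⟨ε, hε, hball⟩ := Metric.isOpen_iff.mp hD z₀ hz₀
  set r : ℝ := ε / 4 with hrdef
  have hr : 0 < r := by positivity
  have hsub : closedBall z₀ (3 * r) ⊆ D := by
    refine (closedBall_subset_ball ?_).trans hball
    rw [hrdef]; linarith
  set e : Fin n → ℂ := Pi.single i 1 with he
  obtain ⟨K, hK⟩ := (isCompact_closedBall z₀ (3 * r)).exists_bound_of_continuousOn
    (hf.continuousOn.mono hsub)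
  have hK0 : 0 ≤ K :=
    le_trans (norm_nonneg _) (hK z₀ (mem_closedBall_self (by linarith)))
  set F : (Fin n → ℂ) → ℝ → ℂ := fun x θ =>
    ((2 * (Real.pi:ℂ))⁻¹ * (circleMap 0 r θ)⁻¹) * f (x + circleMap 0 r θ • e) with hF
  set F' : (Fin n → ℂ) → ℝ → ((Fin n → ℂ) →L[ℂ] ℂ) := fun x θ =>
    ((2 * (Real.pi:ℂ))⁻¹ * (circleMap 0 r θ)⁻¹) • fderiv ℂ f (x + circleMap 0 r θ • e)
    with hF'
  have hmem : ∀ x : Fin n → ℂ, dist x z₀ ≤ r / 2 → ∀ θ : ℝ,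
      x + circleMap 0 r θ • e ∈ closedBall z₀ (3 * r) := by
    intro x hx θ
    rw [mem_closedBall]
    calc dist (x + circleMap 0 r θ • e) z₀
        ≤ dist (x + circleMap 0 r θ • e) x + dist x z₀ := dist_triangle _ _ _
      _ ≤ r + r / 2 := by
          apply add_le_add _ hx
          rw [dist_eq_norm, add_sub_cancel_left, he, norm_single_smul]
          simp [norm_circleMap_zero, abs_of_pos hr]
      _ ≤ 3 * r := by linarith
  have hcont_c : Continuous fun θ : ℝ => ((2 * (Real.pi:ℂ))⁻¹ * (circleMap 0 r θ)⁻¹) := by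
    apply Continuous.mul continuous_const
    exact ((continuous_circleMap 0 r).inv₀ fun θ => circleMap_ne_center hr.ne')
  have hcurve : ∀ x : Fin n → ℂ, Continuous fun θ : ℝ => x + circleMap 0 r θ • e :=
    fun x => continuous_const.add ((continuous_circleMap 0 r).smul continuous_const)
  have hFcont : ∀ x : Fin n → ℂ, dist x z₀ ≤ r / 2 → Continuous (F x) := by
    intro x hx
    apply hcont_c.mul
    exact (hf.continuousOn.mono hsub).comp_continuous (hcurve x) (fun θ => hmem x hx θ)
  have key := intervalIntegral.hasFDerivAt_integral_of_dominated_of_fderiv_le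
    (𝕜 := ℂ) (μ := volume) (a := 0) (b := 2 * Real.pi) (F := F) (F' := F')
    (x₀ := z₀) (bound := fun _ => (2 * Real.pi)⁻¹ * r⁻¹ * (n * (2 * K / r)))
    (Metric.ball_mem_nhds z₀ (half_pos hr))
    (by
      filter_upwards [Metric.ball_mem_nhds z₀ (half_pos hr)] with x hx
      exact ((hFcont x (mem_ball.mp hx).le)).aestronglyMeasurable)
    ((hFcont z₀ (by simp [hr.le]; positivity)).intervalIntegrable 0 (2 * Real.pi))
    (hcont_c.aestronglyMeasurable.smul
      ((measurable_fderiv ℂ f).comp (hcurve z₀).measurable).aestronglyMeasurable)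
    (by
      apply Filter.Eventually.of_forall
      intro θ _ x hx
      rw [hF']
      simp only
      rw [norm_smul ((2 * (Real.pi:ℂ))⁻¹ * (circleMap 0 r θ)⁻¹)
        (fderiv ℂ f (x + circleMap 0 r θ • e))]
      have h1 : ‖(2 * (Real.pi:ℂ))⁻¹ * (circleMap 0 r θ)⁻¹‖ = (2 * Real.pi)⁻¹ * r⁻¹ := by
        rw [norm_mul, norm_inv, norm_inv]
        congr 1
        · have h2 : (2 * (Real.pi:ℂ)) = ((2 * Real.pi : ℝ) : ℂ) := by push_cast; ring
          rw [h2, Complex.norm_real, Real.norm_eq_abs, abs_of_pos Real.two_pi_pos]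
        · rw [norm_circleMap_zero, abs_of_pos hr]
      rw [h1]
      apply mul_le_mul_of_nonneg_left _ (by positivity)
      apply fderiv_norm_le hD hf hr hK0 hsub hK
      rw [mem_closedBall]
      calc dist (x + circleMap 0 r θ • e) z₀
          ≤ dist (x + circleMap 0 r θ • e) x + dist x z₀ := dist_triangle _ _ _
        _ ≤ r + r / 2 := by
            apply add_le_add _ (mem_ball.mp hx).le
            rw [dist_eq_norm, add_sub_cancel_left, he, norm_single_smul]
            simp [norm_circleMap_zero, abs_of_pos hr]
        _ ≤ 2 * r + r / 2 := by linarith)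
    (intervalIntegrable_const)
    (by
      apply Filter.Eventually.of_forall
      intro θ _ x hx
      have hptD : x + circleMap 0 r θ • e ∈ D := hsub (hmem x (mem_ball.mp hx).le θ)
      have hdf : DifferentiableAt ℂ f (x + circleMap 0 r θ • e) :=
        hf.differentiableAt (hD.mem_nhds hptD)
      have htrans : HasFDerivAt (fun y : Fin n → ℂ => y + circleMap 0 r θ • e)
          (ContinuousLinearMap.id ℂ (Fin n → ℂ)) x :=
        (hasFDerivAt_id x).add_const _
      have hcomp := (hdf.hasFDerivAt.comp x htrans)
      rw [ContinuousLinearMap.comp_id] at hcomp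
      exact hcomp.const_mul _)
  have hkey := key
  have heq : partialDeriv i f =ᶠ[nhds z₀] fun x => ∫ θ in (0:ℝ)..2 * Real.pi, F x θ := by
    filter_upwards [Metric.ball_mem_nhds z₀ (half_pos hr)] with x hx
    exact partialDeriv_eq_integral hD hf hr hsub i hx
  rw [Filter.EventuallyEq.differentiableAt_iff heq]
  exact hkey.differentiableAt

lemma diffOn_iter {n : ℕ} {g : (Fin n → ℂ) → ℂ} {D : Set (Fin n → ℂ)}
    (hD : IsOpen D) (hg : DifferentiableOn ℂ g D) (i : Fin n) (m : ℕ) :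
    DifferentiableOn ℂ ((partialDeriv i)^[m] g) D := by
  induction m with
  | zero => exact hg
  | succ m ih =>
    rw [Function.iterate_succ_apply']
    exact diffOn_partialDeriv hD ih i

lemma slice_iter_deriv {n : ℕ} {g : (Fin n → ℂ) → ℂ} {D : Set (Fin n → ℂ)}
    (hD : IsOpen D) (hg : DifferentiableOn ℂ g D) (i : Fin n) (m : ℕ) (z : Fin n → ℂ) :
    ∀ ζ₀ : ℂ, z + ζ₀ • (Pi.single i 1 : Fin n → ℂ) ∈ D →
      ((partialDeriv i)^[m] g) (z + ζ₀ • (Pi.single i 1 : Fin n → ℂ)) =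
        deriv^[m] (fun ζ : ℂ => g (z + ζ • (Pi.single i 1 : Fin n → ℂ))) ζ₀ := by
  induction m with
  | zero => intro ζ₀ _; rfl
  | succ m ih =>
    intro ζ₀ hζ₀
    rw [Function.iterate_succ_apply']
    have hdiff : DifferentiableAt ℂ ((partialDeriv i)^[m] g)
        (z + ζ₀ • (Pi.single i 1 : Fin n → ℂ)) :=
      (diffOn_iter hD hg i m).differentiableAt (hD.mem_nhds hζ₀)
    have h1 := (sliceHasDerivAt i hdiff).deriv
    rw [← h1]
    have hU : IsOpen {ζ : ℂ | z + ζ • (Pi.single i 1 : Fin n → ℂ) ∈ D} := by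
      apply IsOpen.preimage _ hD
      exact continuous_const.add (continuous_id.smul continuous_const)
    have heq : (fun ζ : ℂ => ((partialDeriv i)^[m] g) (z + ζ • (Pi.single i 1 : Fin n → ℂ)))
        =ᶠ[nhds ζ₀] deriv^[m] (fun ζ : ℂ => g (z + ζ • (Pi.single i 1 : Fin n → ℂ))) := by
      filter_upwards [hU.mem_nhds hζ₀] with ζ hζ
      exact ih ζ hζ
    rw [heq.deriv_eq, ← Function.iterate_succ_apply' deriv]

/-- Key estimate (3.2) of the paper: Cauchy inequalities at points near the boundary `S`
propagate to all of `C` via the maximum modulus principle, since the Taylor-coefficient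
functions are holomorphic on `D`. -/
theorem cauchy_inequalities_propagate
    (n : ℕ) (D C S : Set (Fin n → ℂ)) (hD : IsOpen D)
    (hC : IsCompact C) (hCD : C ⊆ D) (hSC : S ⊆ C)
    (hMMP : SatisfiesMMP D C S)
    (ρ : ℝ) (hρ : 0 < ρ) (hthick : {z | Metric.infDist z S ≤ ρ} ⊆ D)
    (f : (Fin n → ℂ) → ℂ) (hf : DifferentiableOn ℂ f D)
    (M : ℝ) (hM : 0 ≤ M)
    (hbound : ∀ z : Fin n → ℂ, Metric.infDist z S ≤ ρ → ‖f z‖ ≤ M) :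
    ∀ z ∈ C, ∀ m : Fin n → ℕ,
      ‖mixedPartialDeriv m f z‖ ≤
        M * (∏ i, ((m i).factorial : ℝ)) / ρ ^ (∑ i, m i) := by
  intro z hz m
  set L : List (((Fin n → ℂ) → ℂ) → (Fin n → ℂ) → ℂ) :=
    List.ofFn fun i : Fin n => (partialDeriv i)^[m i] with hL
  set g : ℕ → (Fin n → ℂ) → ℂ := fun k => ((L.drop k).foldr (· ∘ ·) id) f with hg
  have hgn : g n = f := by
    have h1 : L.drop n = [] := by
      apply List.drop_eq_nil_of_le
      simp [hL]
    simp [hg, h1]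
  have hstep : ∀ k (hk : k < n),
      g k = ((partialDeriv (⟨k, hk⟩ : Fin n))^[m ⟨k, hk⟩]) (g (k + 1)) := by
    intro k hk
    have hlen : k < L.length := by simp [hL, hk]
    simp only [hg]
    rw [List.drop_eq_getElem_cons hlen]
    simp [hL]
  have hdiff : ∀ j k, k + j = n → DifferentiableOn ℂ (g k) D := by
    intro j
    induction j with
    | zero =>
      intro k hk
      have : k = n := by omega
      subst this
      rw [hgn]; exact hf
    | succ j ih =>
      intro k hk
      have hkn : k < n := by omega
      rw [hstep k hkn]
      exact diffOn_iter hD (ih (k + 1) (by omega)) _ _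
  have hg0 : mixedPartialDeriv m f = g 0 := rfl
  obtain ⟨w, hwS, hle⟩ := hMMP (g 0) (hdiff n 0 (by omega)) z hz
  have hwD : ∀ p : Fin n → ℂ, dist p w ≤ ρ → p ∈ D := fun p hp =>
    hthick (le_trans (Metric.infDist_le_dist_of_mem hwS) hp)
  have hbnd : ∀ j k, k + j = n → ∀ x : Fin n → ℂ,
      (∀ t : Fin n, (t : ℕ) < k → dist (x t) (w t) ≤ ρ) →
      (∀ t : Fin n, k ≤ (t : ℕ) → x t = w t) →
      ‖g k x‖ ≤ M * ∏ t ∈ Finset.univ.filter (fun t : Fin n => k ≤ (t : ℕ)),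
        (((m t).factorial : ℝ) / ρ ^ (m t)) := by
    intro j
    induction j with
    | zero =>
      intro k hk x hx1 hx2
      have hkn : k = n := by omega
      have hfilter : Finset.univ.filter (fun t : Fin n => k ≤ (t : ℕ)) = ∅ := by
        apply Finset.filter_false_of_mem
        intro t _
        have := t.isLt
        omega
      rw [hfilter]
      simp only [Finset.prod_empty, mul_one]
      have hgk : g k x = f x := by rw [hkn, hgn]
      rw [hgk]
      have hdist : dist x w ≤ ρ := by
        rw [dist_pi_le_iff hρ.le]
        intro t
        have := t.isLt
        exact hx1 t (by omega)
      have := hbound x (le_trans (Metric.infDist_le_dist_of_mem hwS) hdist)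
      simpa using this
    | succ j ih =>
      intro k hk x hx1 hx2
      have hkn : k < n := by omega
      set i₀ : Fin n := ⟨k, hkn⟩ with hi₀
      have hval : (i₀ : ℕ) = k := rfl
      set ee : Fin n → ℂ := Pi.single i₀ 1 with hee
      have hxk : x i₀ = w i₀ := hx2 i₀ (le_of_eq hval.symm)
      have happ_ne : ∀ (ζ : ℂ) (t : Fin n), t ≠ i₀ → (x + ζ • ee) t = x t := by
        intro ζ t ht
        simp [hee, Pi.single_apply, ht]
      have happ_eq : ∀ ζ : ℂ, (x + ζ • ee) i₀ = x i₀ + ζ := by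
        intro ζ
        simp [hee, Pi.single_apply]
      have hpt : ∀ ζ : ℂ, ‖ζ‖ ≤ ρ → dist (x + ζ • ee) w ≤ ρ := by
        intro ζ hζ
        rw [dist_pi_le_iff hρ.le]
        intro t
        by_cases ht : t = i₀
        · rw [ht, happ_eq, hxk]
          simpa [dist_eq_norm] using hζ
        · rw [happ_ne ζ t ht]
          rcases lt_or_ge ((t : ℕ)) k with h | h
          · exact hx1 t h
          · rw [hx2 t h]
            simp [hρ.le]
      have hcond2 : ∀ (ζ : ℂ) (t : Fin n), k + 1 ≤ (t : ℕ) → (x + ζ • ee) t = w t := by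
        intro ζ t ht
        have htne : t ≠ i₀ := by
          intro h
          rw [h, hval] at ht
          omega
        rw [happ_ne ζ t htne]
        exact hx2 t (by omega)
      set s : ℂ → ℂ := fun ζ => g (k + 1) (x + ζ • ee) with hs
      have hsd : DifferentiableOn ℂ s (closedBall (0 : ℂ) ρ) := by
        apply (sliceDiffOn (hdiff j (k + 1) (by omega)) i₀ x).mono
        intro ζ hζ
        exact hwD _ (hpt ζ (by simpa [dist_eq_norm] using mem_closedBall.mp hζ))
      have hsb : ∀ ζ ∈ closedBall (0 : ℂ) ρ, ‖s ζ‖ ≤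
          M * ∏ t ∈ Finset.univ.filter (fun t : Fin n => k + 1 ≤ (t : ℕ)),
            (((m t).factorial : ℝ) / ρ ^ (m t)) := by
        intro ζ hζ
        have hζ' : ‖ζ‖ ≤ ρ := by simpa [dist_eq_norm] using mem_closedBall.mp hζ
        apply ih (k + 1) (by omega)
        · intro t _
          exact (dist_pi_le_iff hρ.le).mp (hpt ζ hζ') t
        · exact hcond2 ζ
      have hcauchy := oneDimCauchy hρ hsd hsb (m i₀)
      have hxD : x ∈ D := by
        apply hwD x
        rw [dist_pi_le_iff hρ.le]
        intro t
        rcases lt_or_ge ((t : ℕ)) k with h | h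
        · exact hx1 t h
        · rw [hx2 t h]
          simp [hρ.le]
      have hslice := slice_iter_deriv hD (hdiff j (k + 1) (by omega)) i₀ (m i₀) x 0
        (by simpa using hxD)
      have hgkx : g k x = deriv^[m i₀] s 0 := by
        rw [hstep k hkn]
        have h0 : x + (0 : ℂ) • ee = x := by simp
        calc ((partialDeriv i₀)^[m i₀] (g (k+1))) x
            = ((partialDeriv i₀)^[m i₀] (g (k+1))) (x + (0:ℂ) • ee) := by rw [h0]
          _ = deriv^[m i₀] s 0 := hslice
      rw [hgkx]
      have hnotmem : i₀ ∉ Finset.univ.filter (fun t : Fin n => k + 1 ≤ (t : ℕ)) := by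
        simp only [Finset.mem_filter, Finset.mem_univ, true_and, hval, not_le]
        omega
      have hins : Finset.univ.filter (fun t : Fin n => k ≤ (t : ℕ)) =
          insert i₀ (Finset.univ.filter (fun t : Fin n => k + 1 ≤ (t : ℕ))) := by
        ext t
        simp only [Finset.mem_filter, Finset.mem_univ, true_and, Finset.mem_insert]
        constructor
        · intro h
          rcases eq_or_lt_of_le h with h' | h'
          · left
            apply Fin.ext
            rw [hval]
            omega
          · right
            omega
        · rintro (h | h)
          · rw [h, hval]
          · omega
      rw [hins, Finset.prod_insert hnotmem]
      calc ‖deriv^[m i₀] s 0‖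
          ≤ (M * ∏ t ∈ Finset.univ.filter (fun t : Fin n => k + 1 ≤ (t : ℕ)),
              (((m t).factorial : ℝ) / ρ ^ (m t))) * ((m i₀).factorial : ℝ) / ρ ^ (m i₀) :=
            hcauchy
        _ = M * ((((m i₀).factorial : ℝ) / ρ ^ (m i₀)) *
              ∏ t ∈ Finset.univ.filter (fun t : Fin n => k + 1 ≤ (t : ℕ)),
                (((m t).factorial : ℝ) / ρ ^ (m t))) := by ring
  have hfinal := hbnd n 0 (by omega) w (fun t ht => by omega) (fun t _ => rfl)
  have hfilter : Finset.univ.filter (fun t : Fin n => 0 ≤ (t : ℕ)) = Finset.univ := by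
    apply Finset.filter_true_of_mem
    intro t _
    omega
  rw [hfilter] at hfinal
  have hprod : (∏ t : Fin n, (((m t).factorial : ℝ) / ρ ^ (m t))) =
      (∏ t, ((m t).factorial : ℝ)) / ρ ^ (∑ t, m t) := by
    rw [Finset.prod_div_distrib, Finset.prod_pow_eq_pow_sum]
  rw [hprod] at hfinal
  calc ‖mixedPartialDeriv m f z‖ ≤ ‖g 0 w‖ := by
        rw [hg0]; exact hle
    _ ≤ M * (∏ i, ((m i).factorial : ℝ)) / ρ ^ (∑ i, m i) := by
        rw [mul_div_assoc]
        exact hfinal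
end
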